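/- For every n ≥ 1, the convex hull in ℝ^{n×n} of the n×n alternating sign matrices equals the set P(n) of all real n×n matrices X = (x_{ij}) such that 0 ≤ ∑_{i'=1}^{i} x_{i'j} ≤ 1 for all 1 ≤ i,j ≤ n, 0 ≤ ∑_{j'=1}^{j} x_{ij'} ≤ 1 for all 1 ≤ i,j ≤ n, ∑_{i=1}^{n} x_{ij} = 1 for all j, and ∑_{j=1}^{n} x_{ij} = 1 for all i. -/

import Mathlib

open scoped BigOperators

/-- The nonzero entries of the vector `v` alternate in sign: any two nonzero
entries with only zeros strictly between them have opposite values. -/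
def AlternatesSign {n : ℕ} (v : Fin n → ℝ) : Prop :=
  ∀ j₁ j₂ : Fin n, j₁ < j₂ → v j₁ ≠ 0 → v j₂ ≠ 0 →
    (∀ k : Fin n, j₁ < k → k < j₂ → v k = 0) → v j₂ = -v j₁

/-- `A` is an `n × n` alternating sign matrix: entries in `{0, 1, -1}`, each row
and column sums to `1`, and the nonzero entries of each row and column
alternate in sign. -/
def IsASM (n : ℕ) (A : Matrix (Fin n) (Fin n) ℝ) : Prop :=
  (∀ i j, A i j = 0 ∨ A i j = 1 ∨ A i j = -1) ∧
  (∀ i, ∑ j, A i j = 1) ∧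
  (∀ j, ∑ i, A i j = 1) ∧
  (∀ i, AlternatesSign (fun j => A i j)) ∧
  (∀ j, AlternatesSign (fun i => A i j))

/-- The alternating sign matrix polytope: the convex hull of the ASMs. -/
def ASMPolytope (n : ℕ) : Set (Matrix (Fin n) (Fin n) ℝ) :=
  convexHull ℝ {A : Matrix (Fin n) (Fin n) ℝ | IsASM n A}

/-- The inequality description `P(n)`: all real `n × n` matrices whose row and
column partial sums lie in `[0,1]` and whose full row and column sums equal `1`. -/
def PolySet (n : ℕ) : Set (Matrix (Fin n) (Fin n) ℝ) :=
  {X | (∀ i j : Fin n,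
          0 ≤ ∑ i' ∈ Finset.Iic i, X i' j ∧ ∑ i' ∈ Finset.Iic i, X i' j ≤ 1) ∧
       (∀ i j : Fin n,
          0 ≤ ∑ j' ∈ Finset.Iic j, X i j' ∧ ∑ j' ∈ Finset.Iic j, X i j' ≤ 1) ∧
       (∀ j, ∑ i, X i j = 1) ∧
       (∀ i, ∑ j, X i j = 1)}


open scoped BigOperators
open Finset

namespace ASMaux

variable {n : ℕ}

/-- Extension of a matrix by zero to all of `ℕ × ℕ`. -/
noncomputable def ex (X : Matrix (Fin n) (Fin n) ℝ) (i j : ℕ) : ℝ :=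
  if h : i < n ∧ j < n then X ⟨i, h.1⟩ ⟨j, h.2⟩ else 0

/-- Column partial sums: `Rn X i j = ∑_{k < i} X k j`. -/
noncomputable def Rn (X : Matrix (Fin n) (Fin n) ℝ) (i j : ℕ) : ℝ :=
  ∑ k ∈ Finset.range i, ex X k j

/-- Row partial sums: `Cn X i j = ∑_{k < j} X i k`. -/
noncomputable def Cn (X : Matrix (Fin n) (Fin n) ℝ) (i j : ℕ) : ℝ :=
  ∑ k ∈ Finset.range j, ex X i k

lemma ex_in (X : Matrix (Fin n) (Fin n) ℝ) (i j : Fin n) : ex X i.1 j.1 = X i j := by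
  simp [ex, i.2, j.2]

lemma ex_out (X : Matrix (Fin n) (Fin n) ℝ) {i j : ℕ} (h : n ≤ i ∨ n ≤ j) :
    ex X i j = 0 := by
  unfold ex; rw [dif_neg]; omega

lemma sum_Iic_eq (X : Matrix (Fin n) (Fin n) ℝ) (i j : Fin n) :
    ∑ k ∈ Finset.Iic i, X k j = Rn X (i.1+1) j.1 := by
  rw [Rn]
  refine Finset.sum_bij (fun k _ => (k : ℕ)) ?_ ?_ ?_ ?_
  · intro a ha; simp only [Finset.mem_Iic] at ha; simp [Finset.mem_range]; omega
  · intro a _ b _ h; exact Fin.val_injective h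
  · intro b hb
    simp only [Finset.mem_range] at hb
    have hbn : b < n := lt_of_lt_of_le hb i.2
    exact ⟨⟨b, hbn⟩, Finset.mem_Iic.mpr (by simp [Fin.le_def]; omega), rfl⟩
  · intro a ha; simp [ex, a.2, j.2]

lemma sum_Iic_eq' (X : Matrix (Fin n) (Fin n) ℝ) (i j : Fin n) :
    ∑ k ∈ Finset.Iic j, X i k = Cn X i.1 (j.1+1) := by
  rw [Cn]
  refine Finset.sum_bij (fun k _ => (k : ℕ)) ?_ ?_ ?_ ?_
  · intro a ha; simp only [Finset.mem_Iic] at ha; simp [Finset.mem_range]; omega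
  · intro a _ b _ h; exact Fin.val_injective h
  · intro b hb
    simp only [Finset.mem_range] at hb
    have hbn : b < n := lt_of_lt_of_le hb j.2
    exact ⟨⟨b, hbn⟩, Finset.mem_Iic.mpr (by simp [Fin.le_def]; omega), rfl⟩
  · intro a ha; simp [ex, a.2, i.2]

lemma sum_univ_eq (X : Matrix (Fin n) (Fin n) ℝ) (j : Fin n) :
    ∑ k, X k j = Rn X n j.1 := by
  rw [Rn, ← Fin.sum_univ_eq_sum_range]
  exact (Finset.sum_congr rfl fun k _ => (ex_in X k j)).symm

lemma sum_univ_eq' (X : Matrix (Fin n) (Fin n) ℝ) (i : Fin n) :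
    ∑ k, X i k = Cn X i.1 n := by
  rw [Cn, ← Fin.sum_univ_eq_sum_range]
  exact (Finset.sum_congr rfl fun k _ => (ex_in X i k)).symm

lemma Rn_zero (X : Matrix (Fin n) (Fin n) ℝ) (j : ℕ) : Rn X 0 j = 0 := by simp [Rn]

lemma Cn_zero (X : Matrix (Fin n) (Fin n) ℝ) (i : ℕ) : Cn X i 0 = 0 := by simp [Cn]

lemma Rn_out (X : Matrix (Fin n) (Fin n) ℝ) {j : ℕ} (h : n ≤ j) (i : ℕ) : Rn X i j = 0 := by
  unfold Rn
  exact Finset.sum_eq_zero fun k _ => ex_out X (Or.inr h)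

lemma Cn_out (X : Matrix (Fin n) (Fin n) ℝ) {i : ℕ} (h : n ≤ i) (j : ℕ) : Cn X i j = 0 := by
  unfold Cn
  exact Finset.sum_eq_zero fun k _ => ex_out X (Or.inl h)

lemma Rn_succ (X : Matrix (Fin n) (Fin n) ℝ) (i j : ℕ) :
    Rn X (i+1) j = Rn X i j + ex X i j := Finset.sum_range_succ _ _

lemma Cn_succ (X : Matrix (Fin n) (Fin n) ℝ) (i j : ℕ) :
    Cn X i (j+1) = Cn X i j + ex X i j := Finset.sum_range_succ _ _

/-- The fundamental consistency identity. -/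
lemma consistency (X : Matrix (Fin n) (Fin n) ℝ) (i j : ℕ) :
    Rn X (i+1) j - Rn X i j = Cn X i (j+1) - Cn X i j := by
  rw [Rn_succ, Cn_succ]; ring

section PolyFacts

variable {X : Matrix (Fin n) (Fin n) ℝ} (hX : X ∈ PolySet n)

include hX

lemma Rn_bounds : ∀ i ≤ n, ∀ j : ℕ, 0 ≤ Rn X i j ∧ Rn X i j ≤ 1 := by
  intro i hi j
  rcases le_or_gt n j with hj | hj
  · rw [Rn_out X hj]; norm_num
  rcases Nat.eq_zero_or_pos i with rfl | hi0
  · rw [Rn_zero]; norm_num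
  obtain ⟨m, rfl⟩ : ∃ m, i = m + 1 := ⟨i - 1, by omega⟩
  have hm : m < n := by omega
  have := hX.1 ⟨m, hm⟩ ⟨j, hj⟩
  rwa [sum_Iic_eq] at this

lemma Cn_bounds : ∀ j ≤ n, ∀ i : ℕ, 0 ≤ Cn X i j ∧ Cn X i j ≤ 1 := by
  intro j hj i
  rcases le_or_gt n i with hi | hi
  · rw [Cn_out X hi]; norm_num
  rcases Nat.eq_zero_or_pos j with rfl | hj0
  · rw [Cn_zero]; norm_num
  obtain ⟨m, rfl⟩ : ∃ m, j = m + 1 := ⟨j - 1, by omega⟩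
  have hm : m < n := by omega
  have := hX.2.1 ⟨i, hi⟩ ⟨m, hm⟩
  rwa [sum_Iic_eq'] at this

lemma Rn_full : ∀ j < n, Rn X n j = 1 := by
  intro j hj
  have := hX.2.2.1 ⟨j, hj⟩
  rwa [sum_univ_eq] at this

lemma Cn_full : ∀ i < n, Cn X i n = 1 := by
  intro i hi
  have := hX.2.2.2 ⟨i, hi⟩
  rwa [sum_univ_eq'] at this

end PolyFacts

/-- `PolySet n` is convex. -/
lemma convex_polySet : Convex ℝ (PolySet n) := by
  intro X hX Y hY a b ha hb hab
  have hentry : ∀ i j : Fin n, (a • X + b • Y) i j = a * X i j + b * Y i j := by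
    intro i j
    simp [Matrix.add_apply, Matrix.smul_apply, smul_eq_mul]
  have hsum1 : ∀ (s : Finset (Fin n)) (j : Fin n),
      ∑ k ∈ s, (a • X + b • Y) k j = a * ∑ k ∈ s, X k j + b * ∑ k ∈ s, Y k j := by
    intro s j
    rw [Finset.mul_sum, Finset.mul_sum, ← Finset.sum_add_distrib]
    exact Finset.sum_congr rfl fun k _ => hentry k j
  have hsum2 : ∀ (s : Finset (Fin n)) (i : Fin n),
      ∑ k ∈ s, (a • X + b • Y) i k = a * ∑ k ∈ s, X i k + b * ∑ k ∈ s, Y i k := by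
    intro s i
    rw [Finset.mul_sum, Finset.mul_sum, ← Finset.sum_add_distrib]
    exact Finset.sum_congr rfl fun k _ => hentry i k
  refine ⟨fun i j => ?_, fun i j => ?_, fun j => ?_, fun i => ?_⟩
  · rw [hsum1]
    obtain ⟨h1, h2⟩ := hX.1 i j
    obtain ⟨h3, h4⟩ := hY.1 i j
    constructor <;> nlinarith
  · rw [hsum2]
    obtain ⟨h1, h2⟩ := hX.2.1 i j
    obtain ⟨h3, h4⟩ := hY.2.1 i j
    constructor <;> nlinarith
  · rw [hsum1, hX.2.2.1 j, hY.2.2.1 j]; linarith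
  · rw [hsum2, hX.2.2.2 i, hY.2.2.2 i]; linarith

end ASMaux

namespace ASMaux

variable {n : ℕ}


lemma ex_eq (X : Matrix (Fin n) (Fin n) ℝ) {i j : ℕ} (hi : i < n) (hj : j < n) :
    ex X i j = X ⟨i, hi⟩ ⟨j, hj⟩ := dif_pos ⟨hi, hj⟩

/-- Key induction for partial sums of a `{0,1,-1}` alternating sequence. -/
lemma alt_partial (v : ℕ → ℝ) (hv : ∀ k, v k = 0 ∨ v k = 1 ∨ v k = -1)
    (halt : ∀ p q, p < q → v p ≠ 0 → v q ≠ 0 → (∀ k, p < k → k < q → v k = 0) → v q = -v p)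
    (a : ℝ) (hfirst : ∀ i, v i ≠ 0 → (∀ k, k < i → v k = 0) → v i = a) :
    ∀ i, ((∀ k, k < i → v k = 0) ∧ ∑ k ∈ Finset.range i, v k = 0) ∨
      (∃ p, p < i ∧ v p ≠ 0 ∧ (∀ k, p < k → k < i → v k = 0) ∧
        ((v p = a ∧ ∑ k ∈ Finset.range i, v k = a) ∨
         (v p = -a ∧ ∑ k ∈ Finset.range i, v k = 0))) := by
  intro i
  induction i with
  | zero => exact Or.inl ⟨fun k hk => absurd hk (Nat.not_lt_zero k), by simp⟩
  | succ i ih =>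
    rcases eq_or_ne (v i) 0 with h0 | h0
    · rcases ih with ⟨hz, hs⟩ | ⟨p, hp, hvp, hz, hcase⟩
      · refine Or.inl ⟨fun k hk => ?_, ?_⟩
        · rcases Nat.lt_or_ge k i with h | h
          · exact hz k h
          · have : k = i := by omega
            rwa [this]
        · rw [Finset.sum_range_succ, hs, h0]; ring
      · refine Or.inr ⟨p, by omega, hvp, fun k h1 h2 => ?_, ?_⟩
        · rcases Nat.lt_or_ge k i with h | h
          · exact hz k h1 h
          · have : k = i := by omega
            rwa [this]
        · rcases hcase with ⟨h1, h2⟩ | ⟨h1, h2⟩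
          · exact Or.inl ⟨h1, by rw [Finset.sum_range_succ, h2, h0]; ring⟩
          · exact Or.inr ⟨h1, by rw [Finset.sum_range_succ, h2, h0]; ring⟩
    · rcases ih with ⟨hz, hs⟩ | ⟨p, hp, hvp, hz, hcase⟩
      · have hva : v i = a := hfirst i h0 hz
        refine Or.inr ⟨i, by omega, h0, fun k h1 h2 => by omega, Or.inl ⟨hva, ?_⟩⟩
        rw [Finset.sum_range_succ, hs, hva]; ring
      · have halt' : v i = -v p := halt p i hp hvp h0 hz
        rcases hcase with ⟨h1, h2⟩ | ⟨h1, h2⟩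
        · refine Or.inr ⟨i, by omega, h0, fun k hk1 hk2 => by omega, Or.inr ⟨?_, ?_⟩⟩
          · rw [halt', h1]
          · rw [Finset.sum_range_succ, h2, halt', h1]; ring
        · refine Or.inr ⟨i, by omega, h0, fun k hk1 hk2 => by omega, Or.inl ⟨?_, ?_⟩⟩
          · rw [halt', h1]; ring
          · rw [Finset.sum_range_succ, h2, halt', h1]; ring

/-- Partial sums of a `{0,1,-1}` alternating sequence with total sum `1` are `0` or `1`. -/
lemma alt_partial_01 (v : ℕ → ℝ) (N : ℕ)
    (hv : ∀ k, v k = 0 ∨ v k = 1 ∨ v k = -1)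
    (halt : ∀ p q, p < q → v p ≠ 0 → v q ≠ 0 → (∀ k, p < k → k < q → v k = 0) → v q = -v p)
    (htot : ∑ k ∈ Finset.range N, v k = 1) :
    ∀ i, ∑ k ∈ Finset.range i, v k = 0 ∨ ∑ k ∈ Finset.range i, v k = 1 := by
  have hex : ∃ k, v k ≠ 0 := by
    by_contra h
    push_neg at h
    rw [Finset.sum_eq_zero (fun k _ => h k)] at htot
    norm_num at htot
  classical
  set p₀ := Nat.find hex with hp₀
  have hfirst : ∀ i, v i ≠ 0 → (∀ k, k < i → v k = 0) → v i = v p₀ := by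
    intro i hi hz
    have h1 : p₀ ≤ i := Nat.find_le hi
    have h2 : ¬ (p₀ < i) := fun h => absurd (hz p₀ h) (Nat.find_spec hex)
    have : i = p₀ := by omega
    rw [this]
  have key := alt_partial v hv halt (v p₀) hfirst
  have ha1 : v p₀ = 1 := by
    rcases key N with ⟨_, hs⟩ | ⟨p, _, _, _, ⟨_, hs⟩ | ⟨_, hs⟩⟩
    · rw [htot] at hs; norm_num at hs
    · rw [htot] at hs; exact hs.symm
    · rw [htot] at hs; norm_num at hs
  intro i
  rcases key i with ⟨_, hs⟩ | ⟨p, _, _, _, ⟨_, hs⟩ | ⟨_, hs⟩⟩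
  · exact Or.inl hs
  · rw [ha1] at hs; exact Or.inr hs
  · exact Or.inl hs

section ASMside

variable {A : Matrix (Fin n) (Fin n) ℝ} (hA : IsASM n A)

include hA

lemma asm_Rn_01 : ∀ i, ∀ j, Rn A i j = 0 ∨ Rn A i j = 1 ∨ n < i := by
  intro i j
  rcases Nat.lt_or_ge n i with h | hi
  · exact Or.inr (Or.inr h)
  rcases le_or_gt n j with hj | hj
  · rw [Rn_out A hj]; exact Or.inl rfl
  set v : ℕ → ℝ := fun k => ex A k j with hv
  have hvals : ∀ k, v k = 0 ∨ v k = 1 ∨ v k = -1 := by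
    intro k
    by_cases hk : k < n
    · have : v k = A ⟨k, hk⟩ ⟨j, hj⟩ := ex_eq A hk hj
      rw [this]; exact hA.1 _ _
    · left
      show ex A k j = 0
      exact ex_out A (Or.inl (le_of_not_gt hk))
  have halt : ∀ p q, p < q → v p ≠ 0 → v q ≠ 0 →
      (∀ k, p < k → k < q → v k = 0) → v q = -v p := by
    intro p q hpq hp hq hz
    have hpn : p < n := by
      by_contra h
      exact hp (ex_out A (Or.inl (le_of_not_gt h)))
    have hqn : q < n := by
      by_contra h
      exact hq (ex_out A (Or.inl (le_of_not_gt h)))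
    have hvp : v p = A ⟨p, hpn⟩ ⟨j, hj⟩ := ex_eq A hpn hj
    have hvq : v q = A ⟨q, hqn⟩ ⟨j, hj⟩ := ex_eq A hqn hj
    have := hA.2.2.2.2 ⟨j, hj⟩ ⟨p, hpn⟩ ⟨q, hqn⟩ (by simp [Fin.lt_def]; omega)
      (by rwa [hvp] at hp) (by rwa [hvq] at hq)
      (fun k hk1 hk2 => by
        have := hz k.1 (by simpa [Fin.lt_def] using hk1) (by simpa [Fin.lt_def] using hk2)
        rw [hv] at this
        have h0 : ex A k.1 j = 0 := this
        rw [ex_eq A k.2 hj] at h0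
        simpa using h0)
    rw [hvp, hvq]
    exact this
  have htot : ∑ k ∈ Finset.range n, v k = 1 := by
    have := hA.2.2.1 ⟨j, hj⟩
    rw [sum_univ_eq] at this
    exact this
  rcases alt_partial_01 v n hvals halt htot i with h | h
  · exact Or.inl h
  · exact Or.inr (Or.inl h)

lemma asm_Cn_01 : ∀ i, ∀ j, Cn A i j = 0 ∨ Cn A i j = 1 ∨ n < j := by
  intro i j
  rcases Nat.lt_or_ge n j with h | hj
  · exact Or.inr (Or.inr h)
  rcases le_or_gt n i with hi | hi
  · rw [Cn_out A hi]; exact Or.inl rfl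
  set v : ℕ → ℝ := fun k => ex A i k with hv
  have hvals : ∀ k, v k = 0 ∨ v k = 1 ∨ v k = -1 := by
    intro k
    by_cases hk : k < n
    · have : v k = A ⟨i, hi⟩ ⟨k, hk⟩ := ex_eq A hi hk
      rw [this]; exact hA.1 _ _
    · left
      show ex A i k = 0
      exact ex_out A (Or.inr (le_of_not_gt hk))
  have halt : ∀ p q, p < q → v p ≠ 0 → v q ≠ 0 →
      (∀ k, p < k → k < q → v k = 0) → v q = -v p := by
    intro p q hpq hp hq hz
    have hpn : p < n := by
      by_contra h
      exact hp (ex_out A (Or.inr (le_of_not_gt h)))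
    have hqn : q < n := by
      by_contra h
      exact hq (ex_out A (Or.inr (le_of_not_gt h)))
    have hvp : v p = A ⟨i, hi⟩ ⟨p, hpn⟩ := ex_eq A hi hpn
    have hvq : v q = A ⟨i, hi⟩ ⟨q, hqn⟩ := ex_eq A hi hqn
    have := hA.2.2.2.1 ⟨i, hi⟩ ⟨p, hpn⟩ ⟨q, hqn⟩ (by simp [Fin.lt_def]; omega)
      (by rwa [hvp] at hp) (by rwa [hvq] at hq)
      (fun k hk1 hk2 => by
        have := hz k.1 (by simpa [Fin.lt_def] using hk1) (by simpa [Fin.lt_def] using hk2)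
        rw [hv] at this
        have h0 : ex A i k.1 = 0 := this
        rw [ex_eq A hi k.2] at h0
        simpa using h0)
    rw [hvp, hvq]
    exact this
  have htot : ∑ k ∈ Finset.range n, v k = 1 := by
    have := hA.2.1 ⟨i, hi⟩
    rw [sum_univ_eq'] at this
    exact this
  rcases alt_partial_01 v n hvals halt htot j with h | h
  · exact Or.inl h
  · exact Or.inr (Or.inl h)

end ASMside

lemma asm_subset_polySet : {A : Matrix (Fin n) (Fin n) ℝ | IsASM n A} ⊆ PolySet n := by
  intro A hA
  refine ⟨fun i j => ?_, fun i j => ?_, fun j => ?_, fun i => ?_⟩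
  · rw [sum_Iic_eq]
    rcases asm_Rn_01 hA (i.1+1) j.1 with h | h | h
    · rw [h]; norm_num
    · rw [h]; norm_num
    · omega
  · rw [sum_Iic_eq']
    rcases asm_Cn_01 hA i.1 (j.1+1) with h | h | h
    · rw [h]; norm_num
    · rw [h]; norm_num
    · omega
  · exact hA.2.2.1 j
  · exact hA.2.1 i

end ASMaux

namespace ASMaux

/-- In a finite symmetric irreflexive graph where every vertex incident to an edge has at
least two distinct neighbors, there is a cycle. -/
lemma cycle_exists (G : ℕ × ℕ → ℕ × ℕ → Prop)
    (hsym : ∀ u v, G u v → G v u)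
    (hne : ∀ u v, G u v → u ≠ v)
    (hdeg : ∀ u v, G u v → ∃ w₁ w₂, w₁ ≠ w₂ ∧ G u w₁ ∧ G u w₂)
    (hfin : {v | ∃ u, G v u}.Finite)
    (u₀ v₀ : ℕ × ℕ) (h₀ : G u₀ v₀) :
    ∃ (y : ℕ → ℕ × ℕ) (d : ℕ), 3 ≤ d ∧ (∀ t, G (y t) (y (t+1))) ∧ y d = y 0 ∧
      (∀ a, a < d → ∀ b, b < d → y a = y b → a = b) := by
  classical
  -- non-backtracking step
  have hnext : ∀ u v, G u v → ∃ w, G v w ∧ w ≠ u := by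
    intro u v h
    obtain ⟨w₁, w₂, h12, h1, h2⟩ := hdeg v u (hsym _ _ h)
    by_cases hw : w₁ = u
    · exact ⟨w₂, h2, by rw [← hw]; exact Ne.symm h12⟩
    · exact ⟨w₁, h1, hw⟩
  -- the walk, as iterates of a step function on edges
  let E := {p : (ℕ × ℕ) × (ℕ × ℕ) // G p.1 p.2}
  let f : E → E := fun p =>
    ⟨(p.1.2, Classical.choose (hnext p.1.1 p.1.2 p.2)),
      (Classical.choose_spec (hnext p.1.1 p.1.2 p.2)).1⟩
  let W : ℕ → E := fun t => f^[t] ⟨(u₀, v₀), h₀⟩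
  have hWsucc : ∀ t, W (t+1) = f (W t) := by
    intro t
    simp only [W, Function.iterate_succ_apply']
  let w : ℕ → ℕ × ℕ := fun t => (W t).1.1
  have hwsucc : ∀ t, w (t+1) = (W t).1.2 := by
    intro t; simp only [w, hWsucc]; rfl
  have hadj : ∀ t, G (w t) (w (t+1)) := by
    intro t; rw [hwsucc]; exact (W t).2
  have hnb : ∀ t, w (t+2) ≠ w t := by
    intro t
    have h1 : w (t+2) = (W (t+1)).1.2 := hwsucc (t+1)
    have h2 : (W (t+1)).1.2 = Classical.choose (hnext (W t).1.1 (W t).1.2 (W t).2) := by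
      rw [hWsucc t]
    rw [h1, h2]
    exact (Classical.choose_spec (hnext (W t).1.1 (W t).1.2 (W t).2)).2
  -- pigeonhole
  have hmaps : Set.MapsTo w Set.univ {v | ∃ u, G v u} := by
    intro t _
    exact ⟨w (t+1), hadj t⟩
  obtain ⟨a, -, b, -, hab, hwab⟩ :=
    Set.Infinite.exists_ne_map_eq_of_mapsTo Set.infinite_univ hmaps hfin
  have hP : ∃ k, 0 < k ∧ ∃ s, w (s + k) = w s := by
    rcases Nat.lt_or_ge a b with h | h
    · exact ⟨b - a, by omega, a, by rw [show a + (b - a) = b by omega]; exact hwab.symm⟩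
    · have h' : b < a := by omega
      exact ⟨a - b, by omega, b, by rw [show b + (a - b) = a by omega]; exact hwab⟩
  set d := Nat.find hP with hd
  obtain ⟨hdpos, s₀, hs₀⟩ := Nat.find_spec hP
  rw [← hd] at hdpos hs₀
  have hd1 : d ≠ 1 := by
    intro h
    rw [h] at hs₀
    exact hne _ _ (hadj s₀) (hs₀.symm)
  have hd2 : d ≠ 2 := by
    intro h
    rw [h] at hs₀
    exact hnb s₀ hs₀
  have hd3 : 3 ≤ d := by omega
  -- the cycle
  refine ⟨fun t => w (s₀ + t % d), d, hd3, ?_, ?_, ?_⟩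
  · intro t
    show G (w (s₀ + t % d)) (w (s₀ + (t+1) % d))
    have hmod : t % d < d := Nat.mod_lt t hdpos
    rcases Nat.lt_or_ge (t % d + 1) d with h | h
    · have : (t+1) % d = t % d + 1 := by
        rw [Nat.add_mod, Nat.mod_eq_of_lt (show 1 < d by omega), Nat.mod_eq_of_lt h]
      rw [this, ← Nat.add_assoc]
      exact hadj (s₀ + t % d)
    · have he : t % d = d - 1 := by omega
      have : (t+1) % d = 0 := by
        rw [Nat.add_mod, Nat.mod_eq_of_lt (show 1 < d by omega), he,
          show d - 1 + 1 = d by omega, Nat.mod_self]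
      rw [this, he, Nat.add_zero, ← hs₀, show s₀ + d = s₀ + (d-1) + 1 by omega]
      exact hadj (s₀ + (d - 1))
  · simp only [Nat.mod_self, Nat.zero_mod]
  · intro a ha b hb hyab
    by_contra hne'
    have hyab' : w (s₀ + a % d) = w (s₀ + b % d) := hyab
    rw [Nat.mod_eq_of_lt ha, Nat.mod_eq_of_lt hb] at hyab'
    clear hyab
    rename' hyab' => hyab
    rcases Nat.lt_or_ge a b with h | h
    · have : 0 < b - a ∧ ∃ s, w (s + (b - a)) = w s :=
        ⟨by omega, s₀ + a, by rw [show s₀ + a + (b - a) = s₀ + b by omega]; exact hyab.symm⟩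
      exact Nat.find_min hP (show b - a < d by omega) this
    · have h' : b < a := by omega
      have : 0 < a - b ∧ ∃ s, w (s + (a - b)) = w s :=
        ⟨by omega, s₀ + b, by rw [show s₀ + b + (a - b) = s₀ + a by omega]; exact hyab⟩
      exact Nat.find_min hP (show a - b < d by omega) this

end ASMaux

namespace ASMaux

variable {n : ℕ}

/-- A real number is fractional if it differs from `0` and `1`. -/
def Frac (r : ℝ) : Prop := r ≠ 0 ∧ r ≠ 1

lemma not_frac {r : ℝ} : ¬ Frac r ↔ r = 0 ∨ r = 1 := by
  unfold Frac; tauto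

lemma frac_combo {a b c e : ℝ} (hsum : a = b + c - e) (hb : b = 0 ∨ b = 1)
    (hc : c = 0 ∨ c = 1) (he : e = 0 ∨ e = 1) (ha0 : 0 ≤ a) (ha1 : a ≤ 1) :
    a = 0 ∨ a = 1 := by
  rcases hb with rfl | rfl <;> rcases hc with rfl | rfl <;> rcases he with rfl | rfl <;>
    first | (left; linarith) | (right; linarith)

/-- The grid graph on cells, with an edge for each fractional partial sum. -/
def adj (X : Matrix (Fin n) (Fin n) ℝ) (u v : ℕ × ℕ) : Prop :=
  (u.1 < n ∧ v.1 < n ∧ u.2 < n ∧ v.2 < n) ∧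
  ((u.2 = v.2 ∧ (v.1 = u.1 + 1 ∧ Frac (Rn X v.1 u.2) ∨ u.1 = v.1 + 1 ∧ Frac (Rn X u.1 u.2))) ∨
   (u.1 = v.1 ∧ (v.2 = u.2 + 1 ∧ Frac (Cn X u.1 v.2) ∨ u.2 = v.2 + 1 ∧ Frac (Cn X u.1 u.2))))

lemma adj_symm {X : Matrix (Fin n) (Fin n) ℝ} {u v : ℕ × ℕ} (h : adj X u v) : adj X v u := by
  obtain ⟨⟨b1, b2, b3, b4⟩, hc⟩ := h
  refine ⟨⟨b2, b1, b4, b3⟩, ?_⟩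
  rcases hc with ⟨h1, ⟨h2, h3⟩ | ⟨h2, h3⟩⟩ | ⟨h1, ⟨h2, h3⟩ | ⟨h2, h3⟩⟩
  · exact Or.inl ⟨h1.symm, Or.inr ⟨h2, by rwa [h1] at h3⟩⟩
  · exact Or.inl ⟨h1.symm, Or.inl ⟨h2, by rwa [h1] at h3⟩⟩
  · exact Or.inr ⟨h1.symm, Or.inr ⟨h2, by rwa [h1] at h3⟩⟩
  · exact Or.inr ⟨h1.symm, Or.inl ⟨h2, by rwa [h1] at h3⟩⟩

lemma adj_ne {X : Matrix (Fin n) (Fin n) ℝ} {u v : ℕ × ℕ} (h : adj X u v) : u ≠ v := by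
  intro huv
  rcases h.2 with ⟨_, ⟨h2, _⟩ | ⟨h2, _⟩⟩ | ⟨_, ⟨h2, _⟩ | ⟨h2, _⟩⟩ <;> rw [huv] at h2 <;> omega

lemma adj_shape {X : Matrix (Fin n) (Fin n) ℝ} {u v : ℕ × ℕ} (h : adj X u v) :
    (u.2 = v.2 ∧ (v.1 = u.1 + 1 ∨ u.1 = v.1 + 1)) ∨
    (u.1 = v.1 ∧ (v.2 = u.2 + 1 ∨ u.2 = v.2 + 1)) := by
  rcases h.2 with ⟨h1, ⟨h2, _⟩ | ⟨h2, _⟩⟩ | ⟨h1, ⟨h2, _⟩ | ⟨h2, _⟩⟩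
  · exact Or.inl ⟨h1, Or.inl h2⟩
  · exact Or.inl ⟨h1, Or.inr h2⟩
  · exact Or.inr ⟨h1, Or.inl h2⟩
  · exact Or.inr ⟨h1, Or.inr h2⟩

section Graph

variable {X : Matrix (Fin n) (Fin n) ℝ} (hX : X ∈ PolySet n)

include hX

lemma frac_R_pos {i j : ℕ} (h : Frac (Rn X i j)) : 1 ≤ i := by
  rcases Nat.eq_zero_or_pos i with rfl | h1
  · exact absurd (Rn_zero X j) h.1
  · exact h1

lemma frac_R_lt {i j : ℕ} (h : Frac (Rn X i j)) (hi : i ≤ n) (hj : j < n) : i < n := by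
  rcases Nat.lt_or_ge i n with h' | h'
  · exact h'
  · have : i = n := by omega
    subst this
    exact absurd (Rn_full hX j hj) h.2

lemma frac_R_col {i j : ℕ} (h : Frac (Rn X i j)) : j < n := by
  rcases Nat.lt_or_ge j n with h' | h'
  · exact h'
  · exact absurd (Rn_out X h' i) h.1

lemma frac_C_pos {i j : ℕ} (h : Frac (Cn X i j)) : 1 ≤ j := by
  rcases Nat.eq_zero_or_pos j with rfl | h1
  · exact absurd (Cn_zero X i) h.1
  · exact h1

lemma frac_C_lt {i j : ℕ} (h : Frac (Cn X i j)) (hj : j ≤ n) (hi : i < n) : j < n := by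
  rcases Nat.lt_or_ge j n with h' | h'
  · exact h'
  · have : j = n := by omega
    subst this
    exact absurd (Cn_full hX i hi) h.2

lemma frac_C_row {i j : ℕ} (h : Frac (Cn X i j)) : i < n := by
  rcases Nat.lt_or_ge i n with h' | h'
  · exact h'
  · exact absurd (Cn_out X h' j) h.1

omit hX

lemma adj_up {i j : ℕ} (h : Frac (Rn X i j)) (h1 : 1 ≤ i) (hi : i < n) (hj : j < n) :
    adj X (i, j) (i - 1, j) :=
  ⟨⟨hi, by omega, hj, hj⟩, Or.inl ⟨rfl, Or.inr ⟨by omega, h⟩⟩⟩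

lemma adj_down {i j : ℕ} (h : Frac (Rn X (i+1) j)) (hi : i + 1 < n) (hj : j < n) :
    adj X (i, j) (i + 1, j) :=
  ⟨⟨by omega, hi, hj, hj⟩, Or.inl ⟨rfl, Or.inl ⟨rfl, h⟩⟩⟩

lemma adj_left {i j : ℕ} (h : Frac (Cn X i j)) (h1 : 1 ≤ j) (hi : i < n) (hj : j < n) :
    adj X (i, j) (i, j - 1) :=
  ⟨⟨hi, hi, hj, by omega⟩, Or.inr ⟨rfl, Or.inr ⟨by omega, h⟩⟩⟩

lemma adj_right {i j : ℕ} (h : Frac (Cn X i (j+1))) (hi : i < n) (hj : j + 1 < n) :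
    adj X (i, j) (i, j + 1) :=
  ⟨⟨hi, hi, by omega, hj⟩, Or.inr ⟨rfl, Or.inl ⟨rfl, h⟩⟩⟩

include hX

lemma exists_two_nbrs {i j : ℕ} (hi : i < n) (hj : j < n)
    (h : Frac (Rn X i j) ∨ Frac (Rn X (i+1) j) ∨ Frac (Cn X i j) ∨ Frac (Cn X i (j+1))) :
    ∃ w₁ w₂, w₁ ≠ w₂ ∧ adj X (i, j) w₁ ∧ adj X (i, j) w₂ := by
  set a := Rn X i j
  set b := Rn X (i+1) j
  set c := Cn X i j
  set e := Cn X i (j+1)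
  have hid : b - a = e - c := consistency X i j
  have hab : 0 ≤ a ∧ a ≤ 1 := Rn_bounds hX i (by omega) j
  have hbb : 0 ≤ b ∧ b ≤ 1 := Rn_bounds hX (i+1) (by omega) j
  have hcb : 0 ≤ c ∧ c ≤ 1 := Cn_bounds hX j (by omega) i
  have heb : 0 ≤ e ∧ e ≤ 1 := Cn_bounds hX (j+1) (by omega) i
  have secondA : Frac a → Frac b ∨ Frac c ∨ Frac e := by
    intro hf
    by_contra hno
    rw [not_or, not_or] at hno
    obtain ⟨h1, h2, h3⟩ := hno
    exact (not_frac.mpr (frac_combo (show a = b + c - e by linarith) (not_frac.mp h1)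
      (not_frac.mp h2) (not_frac.mp h3) hab.1 hab.2)) hf
  have secondB : Frac b → Frac a ∨ Frac c ∨ Frac e := by
    intro hf
    by_contra hno
    rw [not_or, not_or] at hno
    obtain ⟨h1, h2, h3⟩ := hno
    exact (not_frac.mpr (frac_combo (show b = a + e - c by linarith) (not_frac.mp h1)
      (not_frac.mp h3) (not_frac.mp h2) hbb.1 hbb.2)) hf
  have secondC : Frac c → Frac a ∨ Frac b ∨ Frac e := by
    intro hf
    by_contra hno
    rw [not_or, not_or] at hno
    obtain ⟨h1, h2, h3⟩ := hno
    exact (not_frac.mpr (frac_combo (show c = e + a - b by linarith) (not_frac.mp h3)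
      (not_frac.mp h1) (not_frac.mp h2) hcb.1 hcb.2)) hf
  have secondE : Frac e → Frac a ∨ Frac b ∨ Frac c := by
    intro hf
    by_contra hno
    rw [not_or, not_or] at hno
    obtain ⟨h1, h2, h3⟩ := hno
    exact (not_frac.mpr (frac_combo (show e = c + b - a by linarith) (not_frac.mp h3)
      (not_frac.mp h2) (not_frac.mp h1) heb.1 heb.2)) hf
  -- now build the two neighbors
  have mka : Frac a → 1 ≤ i ∧ adj X (i, j) (i - 1, j) := fun hf =>
    ⟨frac_R_pos hX hf, adj_up hf (frac_R_pos hX hf) hi hj⟩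
  have mkb : Frac b → i + 1 < n ∧ adj X (i, j) (i + 1, j) := fun hf =>
    ⟨frac_R_lt hX hf (by omega) hj, adj_down hf (frac_R_lt hX hf (by omega) hj) hj⟩
  have mkc : Frac c → 1 ≤ j ∧ adj X (i, j) (i, j - 1) := fun hf =>
    ⟨frac_C_pos hX hf, adj_left hf (frac_C_pos hX hf) hi hj⟩
  have mke : Frac e → j + 1 < n ∧ adj X (i, j) (i, j + 1) := fun hf =>
    ⟨frac_C_lt hX hf (by omega) hi, adj_right hf hi (frac_C_lt hX hf (by omega) hi)⟩
  have bab : Frac a → Frac b → ∃ w₁ w₂, w₁ ≠ w₂ ∧ adj X (i, j) w₁ ∧ adj X (i, j) w₂ := by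
    intro h1 h2
    obtain ⟨p1, q1⟩ := mka h1; obtain ⟨p2, q2⟩ := mkb h2
    exact ⟨_, _, by simp only [ne_eq, Prod.mk.injEq]; omega, q1, q2⟩
  have bac : Frac a → Frac c → ∃ w₁ w₂, w₁ ≠ w₂ ∧ adj X (i, j) w₁ ∧ adj X (i, j) w₂ := by
    intro h1 h2
    obtain ⟨p1, q1⟩ := mka h1; obtain ⟨p2, q2⟩ := mkc h2
    exact ⟨_, _, by simp only [ne_eq, Prod.mk.injEq]; omega, q1, q2⟩
  have bae : Frac a → Frac e → ∃ w₁ w₂, w₁ ≠ w₂ ∧ adj X (i, j) w₁ ∧ adj X (i, j) w₂ := by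
    intro h1 h2
    obtain ⟨p1, q1⟩ := mka h1; obtain ⟨p2, q2⟩ := mke h2
    exact ⟨_, _, by simp only [ne_eq, Prod.mk.injEq]; omega, q1, q2⟩
  have bbc : Frac b → Frac c → ∃ w₁ w₂, w₁ ≠ w₂ ∧ adj X (i, j) w₁ ∧ adj X (i, j) w₂ := by
    intro h1 h2
    obtain ⟨p1, q1⟩ := mkb h1; obtain ⟨p2, q2⟩ := mkc h2
    exact ⟨_, _, by simp only [ne_eq, Prod.mk.injEq]; omega, q1, q2⟩
  have bbe : Frac b → Frac e → ∃ w₁ w₂, w₁ ≠ w₂ ∧ adj X (i, j) w₁ ∧ adj X (i, j) w₂ := by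
    intro h1 h2
    obtain ⟨p1, q1⟩ := mkb h1; obtain ⟨p2, q2⟩ := mke h2
    exact ⟨_, _, by simp only [ne_eq, Prod.mk.injEq]; omega, q1, q2⟩
  have bce : Frac c → Frac e → ∃ w₁ w₂, w₁ ≠ w₂ ∧ adj X (i, j) w₁ ∧ adj X (i, j) w₂ := by
    intro h1 h2
    obtain ⟨p1, q1⟩ := mkc h1; obtain ⟨p2, q2⟩ := mke h2
    exact ⟨_, _, by simp only [ne_eq, Prod.mk.injEq]; omega, q1, q2⟩
  rcases h with h | h | h | h
  · rcases secondA h with h2 | h2 | h2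
    exacts [bab h h2, bac h h2, bae h h2]
  · rcases secondB h with h2 | h2 | h2
    exacts [bab h2 h, bbc h h2, bbe h h2]
  · rcases secondC h with h2 | h2 | h2
    exacts [bac h2 h, bbc h2 h, bce h h2]
  · rcases secondE h with h2 | h2 | h2
    exacts [bae h2 h, bbe h2 h, bce h2 h]

lemma adj_deg (u v : ℕ × ℕ) (h : adj X u v) :
    ∃ w₁ w₂, w₁ ≠ w₂ ∧ adj X u w₁ ∧ adj X u w₂ := by
  obtain ⟨⟨b1, b2, b3, b4⟩, hc⟩ := h
  have hu : u = (u.1, u.2) := rfl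
  rw [hu]
  apply exists_two_nbrs hX b1 b3
  rcases hc with ⟨h1, ⟨h2, h3⟩ | ⟨h2, h3⟩⟩ | ⟨h1, ⟨h2, h3⟩ | ⟨h2, h3⟩⟩
  · exact Or.inr (Or.inl (by rwa [← h2]))
  · exact Or.inl h3
  · exact Or.inr (Or.inr (Or.inr (by rwa [← h2])))
  · exact Or.inr (Or.inr (Or.inl h3))

omit hX

lemma adj_fin (X : Matrix (Fin n) (Fin n) ℝ) : {v : ℕ × ℕ | ∃ u, adj X v u}.Finite := by
  apply Set.Finite.subset (Finset.finite_toSet ((Finset.range n) ×ˢ (Finset.range n)))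
  rintro v ⟨u, h⟩
  simp only [Finset.coe_product, Set.mem_prod, Finset.mem_coe, Finset.mem_range]
  exact ⟨h.1.1, h.1.2.2.1⟩

end Graph

end ASMaux

namespace ASMaux

variable {n : ℕ}

/-- Contribution of a traversal from `u` to `v` to the column-partial-sum perturbation. -/
noncomputable def rstep (u v : ℕ × ℕ) (p q : ℕ) : ℝ :=
  if q = u.2 ∧ v.2 = u.2 ∧ p = max u.1 v.1 then (if v.1 < u.1 then 1 else -1) else 0

/-- Contribution of a traversal from `u` to `v` to the row-partial-sum perturbation. -/
noncomputable def cstep (u v : ℕ × ℕ) (p q : ℕ) : ℝ :=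
  if p = u.1 ∧ v.1 = u.1 ∧ q = max u.2 v.2 then (if v.2 < u.2 then -1 else 1) else 0

lemma rstep_abs (u v : ℕ × ℕ) (p q : ℕ) : |rstep u v p q| ≤ 1 := by
  unfold rstep; split_ifs <;> norm_num

lemma cstep_abs (u v : ℕ × ℕ) (p q : ℕ) : |cstep u v p q| ≤ 1 := by
  unfold cstep; split_ifs <;> norm_num

set_option maxHeartbeats 2000000 in
/-- The per-traversal consistency identity (telescoping form). -/
lemma step_cons (u v : ℕ × ℕ)
    (h : (u.2 = v.2 ∧ (v.1 = u.1 + 1 ∨ u.1 = v.1 + 1)) ∨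
         (u.1 = v.1 ∧ (v.2 = u.2 + 1 ∨ u.2 = v.2 + 1))) (i j : ℕ) :
    rstep u v (i+1) j - rstep u v i j - cstep u v i (j+1) + cstep u v i j
      = (if (i, j) = v then 1 else 0) - (if (i, j) = u then 1 else 0) := by
  obtain ⟨a, b⟩ := u
  obtain ⟨c, e⟩ := v
  simp only [rstep, cstep, Prod.mk.injEq] at *
  have m1 : ∀ m : ℕ, m ⊔ (m+1) = m+1 := fun m => max_eq_right (Nat.le_succ m)
  have m2 : ∀ m : ℕ, (m+1) ⊔ m = m+1 := fun m => max_eq_left (Nat.le_succ m)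
  have m3 : ∀ m : ℕ, m ⊔ m = m := fun m => max_self m
  rcases h with ⟨h1, h2 | h2⟩ | ⟨h1, h2 | h2⟩ <;> subst h1 <;> subst h2 <;>
    simp only [m1, m2, m3, eq_self_iff_true, true_and, and_true] <;>
    split_ifs <;> first | omega | (norm_num) | (norm_num; omega)

section Cycle

variable {X : Matrix (Fin n) (Fin n) ℝ} {y : ℕ → ℕ × ℕ} {d : ℕ}
variable (hadj : ∀ t, adj X (y t) (y (t+1)))

/-- Perturbation of the column partial sums. -/
noncomputable def rho (y : ℕ → ℕ × ℕ) (d : ℕ) (p q : ℕ) : ℝ :=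
  ∑ t ∈ Finset.range d, rstep (y t) (y (t+1)) p q

/-- Perturbation of the row partial sums. -/
noncomputable def gam (y : ℕ → ℕ × ℕ) (d : ℕ) (p q : ℕ) : ℝ :=
  ∑ t ∈ Finset.range d, cstep (y t) (y (t+1)) p q

include hadj

lemma rstep_supp {t p q : ℕ} (h : rstep (y t) (y (t+1)) p q ≠ 0) :
    ((y t = (p - 1, q) ∧ y (t+1) = (p, q)) ∨ (y t = (p, q) ∧ y (t+1) = (p - 1, q))) ∧
      1 ≤ p ∧ p < n ∧ q < n ∧ Frac (Rn X p q) := by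
  have hcond : q = (y t).2 ∧ (y (t+1)).2 = (y t).2 ∧ p = max (y t).1 (y (t+1)).1 := by
    by_contra hc
    exact h (if_neg hc)
  obtain ⟨hq, he, hp⟩ := hcond
  obtain ⟨⟨b1, b2, b3, b4⟩, hcase⟩ := hadj t
  rcases hcase with ⟨h1, ⟨h2, h3⟩ | ⟨h2, h3⟩⟩ | ⟨h1, h2⟩
  · -- downward: y (t+1) = (y t).1 + 1
    refine ⟨Or.inl ⟨?_, ?_⟩, by omega, by omega, by omega, ?_⟩
    · have : (y t) = ((y t).1, (y t).2) := rfl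
      rw [this, Prod.mk.injEq]; omega
    · have : (y (t+1)) = ((y (t+1)).1, (y (t+1)).2) := rfl
      rw [this, Prod.mk.injEq]; omega
    · have : p = (y (t+1)).1 := by omega
      rw [this, hq]
      exact h3
  · -- upward
    refine ⟨Or.inr ⟨?_, ?_⟩, by omega, by omega, by omega, ?_⟩
    · have : (y t) = ((y t).1, (y t).2) := rfl
      rw [this, Prod.mk.injEq]; omega
    · have : (y (t+1)) = ((y (t+1)).1, (y (t+1)).2) := rfl
      rw [this, Prod.mk.injEq]; omega
    · have : p = (y t).1 := by omega
      rw [this, hq]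
      exact h3
  · -- horizontal: contradiction with he
    rcases h2 with ⟨h2, _⟩ | ⟨h2, _⟩ <;> omega

lemma cstep_supp {t p q : ℕ} (h : cstep (y t) (y (t+1)) p q ≠ 0) :
    ((y t = (p, q - 1) ∧ y (t+1) = (p, q)) ∨ (y t = (p, q) ∧ y (t+1) = (p, q - 1))) ∧
      1 ≤ q ∧ q < n ∧ p < n ∧ Frac (Cn X p q) := by
  have hcond : p = (y t).1 ∧ (y (t+1)).1 = (y t).1 ∧ q = max (y t).2 (y (t+1)).2 := by
    by_contra hc
    exact h (if_neg hc)
  obtain ⟨hq, he, hp⟩ := hcond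
  obtain ⟨⟨b1, b2, b3, b4⟩, hcase⟩ := hadj t
  rcases hcase with ⟨h1, h2⟩ | ⟨h1, ⟨h2, h3⟩ | ⟨h2, h3⟩⟩
  · rcases h2 with ⟨h2, _⟩ | ⟨h2, _⟩ <;> omega
  · -- rightward
    refine ⟨Or.inl ⟨?_, ?_⟩, by omega, by omega, by omega, ?_⟩
    · have : (y t) = ((y t).1, (y t).2) := rfl
      rw [this, Prod.mk.injEq]; omega
    · have : (y (t+1)) = ((y (t+1)).1, (y (t+1)).2) := rfl
      rw [this, Prod.mk.injEq]; omega
    · have : q = (y (t+1)).2 := by omega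
      rw [this, hq]
      exact h3
  · -- leftward
    refine ⟨Or.inr ⟨?_, ?_⟩, by omega, by omega, by omega, ?_⟩
    · have : (y t) = ((y t).1, (y t).2) := rfl
      rw [this, Prod.mk.injEq]; omega
    · have : (y (t+1)) = ((y (t+1)).1, (y (t+1)).2) := rfl
      rw [this, Prod.mk.injEq]; omega
    · have : q = (y t).2 := by omega
      rw [this, hq]
      exact h3

lemma rho_supp {p q : ℕ} (h : rho y d p q ≠ 0) :
    1 ≤ p ∧ p < n ∧ q < n ∧ Frac (Rn X p q) := by
  obtain ⟨t, _, ht⟩ := Finset.exists_ne_zero_of_sum_ne_zero h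
  exact (rstep_supp hadj ht).2

lemma gam_supp {p q : ℕ} (h : gam y d p q ≠ 0) :
    1 ≤ q ∧ q < n ∧ p < n ∧ Frac (Cn X p q) := by
  obtain ⟨t, _, ht⟩ := Finset.exists_ne_zero_of_sum_ne_zero h
  exact (cstep_supp hadj ht).2

lemma rho_abs (p q : ℕ) : |rho y d p q| ≤ d := by
  calc |rho y d p q| ≤ ∑ t ∈ Finset.range d, |rstep (y t) (y (t+1)) p q| :=
        Finset.abs_sum_le_sum_abs _ _
    _ ≤ ∑ _t ∈ Finset.range d, (1:ℝ) := Finset.sum_le_sum fun t _ => rstep_abs _ _ _ _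
    _ = d := by simp

lemma gam_abs (p q : ℕ) : |gam y d p q| ≤ d := by
  calc |gam y d p q| ≤ ∑ t ∈ Finset.range d, |cstep (y t) (y (t+1)) p q| :=
        Finset.abs_sum_le_sum_abs _ _
    _ ≤ ∑ _t ∈ Finset.range d, (1:ℝ) := Finset.sum_le_sum fun t _ => cstep_abs _ _ _ _
    _ = d := by simp

lemma rho_gam_cons (hper : y d = y 0) (i j : ℕ) :
    rho y d (i+1) j - rho y d i j - gam y d i (j+1) + gam y d i j = 0 := by
  unfold rho gam
  rw [← Finset.sum_sub_distrib, ← Finset.sum_sub_distrib, ← Finset.sum_add_distrib]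
  have : ∀ t ∈ Finset.range d,
      rstep (y t) (y (t+1)) (i+1) j - rstep (y t) (y (t+1)) i j
        - cstep (y t) (y (t+1)) i (j+1) + cstep (y t) (y (t+1)) i j
      = (if (i, j) = y (t+1) then (1:ℝ) else 0) - (if (i, j) = y t then (1:ℝ) else 0) := by
    intro t _
    exact step_cons (y t) (y (t+1)) (adj_shape (hadj t)) i j
  rw [Finset.sum_congr rfl this, Finset.sum_range_sub (fun t => if (i, j) = y t then (1:ℝ) else 0)]
  rw [hper]
  ring

end Cycle

end ASMaux

namespace ASMaux

variable {n : ℕ}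

/-- The perturbed matrix. -/
noncomputable def pert (X : Matrix (Fin n) (Fin n) ℝ) (y : ℕ → ℕ × ℕ) (d : ℕ) (s : ℝ) :
    Matrix (Fin n) (Fin n) ℝ :=
  fun i j => X i j + s * (rho y d (i.1+1) j.1 - rho y d i.1 j.1)

section Pert

variable {X : Matrix (Fin n) (Fin n) ℝ} {y : ℕ → ℕ × ℕ} {d : ℕ} {s : ℝ}
variable (hadj : ∀ t, adj X (y t) (y (t+1)))

include hadj

lemma rho_zero_left (j : ℕ) : rho y d 0 j = 0 := by
  by_contra h
  exact absurd (rho_supp hadj h).1 (by omega)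

lemma gam_zero_left (i : ℕ) : gam y d i 0 = 0 := by
  by_contra h
  exact absurd (gam_supp hadj h).1 (by omega)

lemma ex_pert (i j : ℕ) :
    ex (pert X y d s) i j = ex X i j + s * (rho y d (i+1) j - rho y d i j) := by
  by_cases h : i < n ∧ j < n
  · rw [ex_eq _ h.1 h.2, ex_eq X h.1 h.2]
    rfl
  · have h1 : ex (pert X y d s) i j = 0 := by
      unfold ex; rw [dif_neg h]
    have h2 : ex X i j = 0 := by
      unfold ex; rw [dif_neg h]
    have h3 : rho y d (i+1) j = 0 := by
      by_contra hc
      obtain ⟨_, hp, hq, _⟩ := rho_supp hadj hc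
      omega
    have h4 : rho y d i j = 0 := by
      by_contra hc
      obtain ⟨_, hp, hq, _⟩ := rho_supp hadj hc
      omega
    rw [h1, h2, h3, h4]
    ring

lemma Rn_pert (i j : ℕ) :
    Rn (pert X y d s) i j = Rn X i j + s * rho y d i j := by
  unfold Rn
  rw [Finset.sum_congr rfl fun k _ => ex_pert hadj k j]
  rw [Finset.sum_add_distrib, ← Finset.mul_sum,
    Finset.sum_range_sub (fun k => rho y d k j), rho_zero_left hadj j]
  ring

lemma Cn_pert (hper : y d = y 0) (i j : ℕ) :
    Cn (pert X y d s) i j = Cn X i j + s * gam y d i j := by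
  unfold Cn
  rw [Finset.sum_congr rfl fun k _ => ex_pert hadj i k]
  have step : ∀ k, rho y d (i+1) k - rho y d i k = gam y d i (k+1) - gam y d i k := by
    intro k
    have := rho_gam_cons hadj hper i k
    linarith
  rw [Finset.sum_congr rfl fun k _ => by rw [step k]]
  rw [Finset.sum_add_distrib, ← Finset.mul_sum,
    Finset.sum_range_sub (fun k => gam y d i k), gam_zero_left hadj i]
  ring

end Pert

/-- Any matrix in `PolySet n` having a fractional partial sum is not an extreme point. -/
lemma not_extremePoint_of_frac {X : Matrix (Fin n) (Fin n) ℝ} (hX : X ∈ PolySet n)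
    (hfr : ∃ p q, p ≤ n ∧ q ≤ n ∧ (Frac (Rn X p q) ∨ Frac (Cn X p q))) :
    X ∉ Set.extremePoints ℝ (PolySet n) := by
  classical
  -- an initial edge
  obtain ⟨p₀, q₀, hp₀, hq₀, hfr⟩ := hfr
  have hedge : ∃ u v, adj X u v := by
    rcases hfr with h | h
    · have h1 : 1 ≤ p₀ := frac_R_pos hX h
      have h3 : q₀ < n := frac_R_col hX h
      have h2 : p₀ < n := frac_R_lt hX h hp₀ h3
      obtain ⟨p', rfl⟩ : ∃ p', p₀ = p' + 1 := ⟨p₀ - 1, by omega⟩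
      exact ⟨(p', q₀), (p'+1, q₀), adj_down h h2 h3⟩
    · have h1 : 1 ≤ q₀ := frac_C_pos hX h
      have h3 : p₀ < n := frac_C_row hX h
      have h2 : q₀ < n := frac_C_lt hX h hq₀ h3
      obtain ⟨q', rfl⟩ : ∃ q', q₀ = q' + 1 := ⟨q₀ - 1, by omega⟩
      exact ⟨(p₀, q'), (p₀, q'+1), adj_right h h3 h2⟩
  obtain ⟨u₀, v₀, h₀⟩ := hedge
  obtain ⟨y, d, hd3, hadj, hper, hinj⟩ :=
    cycle_exists (adj X) (fun u v h => adj_symm h) (fun u v h => adj_ne h)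
      (fun u v h => adj_deg hX u v h) (adj_fin X) u₀ v₀ h₀
  -- the threshold m and the step size eps
  set Fs : Finset ℝ := insert (1:ℝ)
    ((((Finset.range (n+1) ×ˢ Finset.range (n+1)).image (fun pq => Rn X pq.1 pq.2) ∪
       (Finset.range (n+1) ×ˢ Finset.range (n+1)).image (fun pq => 1 - Rn X pq.1 pq.2)) ∪
      ((Finset.range (n+1) ×ˢ Finset.range (n+1)).image (fun pq => Cn X pq.1 pq.2) ∪
       (Finset.range (n+1) ×ˢ Finset.range (n+1)).image (fun pq => 1 - Cn X pq.1 pq.2))).filter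
      (fun r => 0 < r)) with hFs
  have hFs_ne : Fs.Nonempty := ⟨1, Finset.mem_insert_self _ _⟩
  set m := Fs.min' hFs_ne with hm
  have hm_pos : 0 < m := by
    have := Fs.min'_mem hFs_ne
    rw [← hm] at this
    rw [hFs] at this
    rcases Finset.mem_insert.mp this with h | h
    · rw [h]; norm_num
    · exact (Finset.mem_filter.mp h).2
  have hmemR : ∀ p q : ℕ, p ≤ n → q ≤ n → Frac (Rn X p q) →
      m ≤ Rn X p q ∧ m ≤ 1 - Rn X p q := by
    intro p q hp hq hf
    have hb := Rn_bounds hX p hp q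
    constructor
    · apply Finset.min'_le
      rw [hFs]
      apply Finset.mem_insert_of_mem
      rw [Finset.mem_filter]
      refine ⟨?_, lt_of_le_of_ne hb.1 (Ne.symm hf.1)⟩
      apply Finset.mem_union_left
      apply Finset.mem_union_left
      exact Finset.mem_image.mpr ⟨(p, q), by simp [Finset.mem_product]; omega, rfl⟩
    · apply Finset.min'_le
      rw [hFs]
      apply Finset.mem_insert_of_mem
      rw [Finset.mem_filter]
      refine ⟨?_, by have := hf.2; cases lt_or_eq_of_le hb.2 with
        | inl h => linarith
        | inr h => exact absurd h hf.2⟩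
      apply Finset.mem_union_left
      apply Finset.mem_union_right
      exact Finset.mem_image.mpr ⟨(p, q), by simp [Finset.mem_product]; omega, rfl⟩
  have hmemC : ∀ p q : ℕ, p ≤ n → q ≤ n → Frac (Cn X p q) →
      m ≤ Cn X p q ∧ m ≤ 1 - Cn X p q := by
    intro p q hp hq hf
    have hb := Cn_bounds hX q hq p
    constructor
    · apply Finset.min'_le
      rw [hFs]
      apply Finset.mem_insert_of_mem
      rw [Finset.mem_filter]
      refine ⟨?_, lt_of_le_of_ne hb.1 (Ne.symm hf.1)⟩
      apply Finset.mem_union_right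
      apply Finset.mem_union_left
      exact Finset.mem_image.mpr ⟨(p, q), by simp [Finset.mem_product]; omega, rfl⟩
    · apply Finset.min'_le
      rw [hFs]
      apply Finset.mem_insert_of_mem
      rw [Finset.mem_filter]
      refine ⟨?_, by have := hf.2; cases lt_or_eq_of_le hb.2 with
        | inl h => linarith
        | inr h => exact absurd h hf.2⟩
      apply Finset.mem_union_right
      apply Finset.mem_union_right
      exact Finset.mem_image.mpr ⟨(p, q), by simp [Finset.mem_product]; omega, rfl⟩
  set eps := m / (d + 1 : ℝ) with heps
  have hd_pos : (0:ℝ) < d + 1 := by positivity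
  have heps_pos : 0 < eps := div_pos hm_pos hd_pos
  have heps_d : eps * d < m := by
    have h1 : eps * (d + 1) = m := div_mul_cancel₀ m (ne_of_gt hd_pos)
    nlinarith
  -- membership of the perturbed matrices
  have hmem : ∀ s : ℝ, |s| ≤ eps → pert X y d s ∈ PolySet n := by
    intro s hs
    have habs : ∀ p q : ℕ, |s * rho y d p q| ≤ eps * d := by
      intro p q
      rw [abs_mul]
      exact mul_le_mul hs (rho_abs hadj p q) (abs_nonneg _) (le_of_lt heps_pos)
    have habs' : ∀ p q : ℕ, |s * gam y d p q| ≤ eps * d := by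
      intro p q
      rw [abs_mul]
      exact mul_le_mul hs (gam_abs hadj p q) (abs_nonneg _) (le_of_lt heps_pos)
    refine ⟨fun i j => ?_, fun i j => ?_, fun j => ?_, fun i => ?_⟩
    · rw [sum_Iic_eq, Rn_pert hadj]
      by_cases hz : rho y d (i.1+1) j.1 = 0
      · rw [hz]
        have := Rn_bounds hX (i.1+1) (by omega) j.1
        constructor <;> [linarith [this.1]; linarith [this.2]]
      · obtain ⟨_, hpn, hqn, hf⟩ := rho_supp hadj hz
        obtain ⟨hm1, hm2⟩ := hmemR (i.1+1) j.1 (by omega) (by omega) hf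
        have h3 := habs (i.1+1) j.1
        have h4 := abs_le.mp (le_trans h3 (le_of_lt heps_d))
        constructor <;> [linarith [h4.1]; linarith [h4.2]]
    · rw [sum_Iic_eq', Cn_pert hadj hper]
      by_cases hz : gam y d i.1 (j.1+1) = 0
      · rw [hz]
        have := Cn_bounds hX (j.1+1) (by omega) i.1
        constructor <;> [linarith [this.1]; linarith [this.2]]
      · obtain ⟨_, hqn, hpn, hf⟩ := gam_supp hadj hz
        obtain ⟨hm1, hm2⟩ := hmemC i.1 (j.1+1) (by omega) (by omega) hf
        have h3 := habs' i.1 (j.1+1)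
        have h4 := abs_le.mp (le_trans h3 (le_of_lt heps_d))
        constructor <;> [linarith [h4.1]; linarith [h4.2]]
    · rw [sum_univ_eq, Rn_pert hadj]
      have hz : rho y d n j.1 = 0 := by
        by_contra hc
        obtain ⟨_, hpn, _, _⟩ := rho_supp hadj hc
        omega
      rw [hz, Rn_full hX j.1 j.2]
      ring
    · rw [sum_univ_eq', Cn_pert hadj hper]
      have hz : gam y d i.1 n = 0 := by
        by_contra hc
        obtain ⟨_, hqn, _, _⟩ := gam_supp hadj hc
        omega
      rw [hz, Cn_full hX i.1 i.2]
      ring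
  -- nontriviality
  have hne : pert X y d eps ≠ X := by
    have hinj' : ∀ a, a < d → ∀ b, b < d → y a = y b → a = b := hinj
    rcases adj_shape (hadj 0) with ⟨hv, _⟩ | ⟨hv, _⟩
    · -- vertical first edge
      set P := max (y 0).1 (y 1).1 with hP
      set Q := (y 0).2 with hQ
      have hst : rstep (y 0) (y 1) P Q ≠ 0 := by
        unfold rstep
        rw [if_pos ⟨rfl, hv.symm, rfl⟩]
        split_ifs <;> norm_num
      have hothers : ∀ t ∈ Finset.range d, t ≠ 0 → rstep (y t) (y (t+1)) P Q = 0 := by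
        intro t htr ht0
        by_contra hc
        have h1 := (rstep_supp hadj hc).1
        have h0 := (rstep_supp hadj hst).1
        have htd : t < d := Finset.mem_range.mp htr
        have h1d : 1 < d := by omega
        have h2d : 2 < d := by omega
        have hyt : y t = y 0 ∨ y t = y 1 := by
          rcases h1 with ⟨ha, hb⟩ | ⟨ha, hb⟩ <;> rcases h0 with ⟨hc', hd'⟩ | ⟨hc', hd'⟩
          · exact Or.inl (by rw [ha, hc'])
          · exact Or.inr (by rw [ha, hd'])
          · exact Or.inr (by rw [ha, hd'])
          · exact Or.inl (by rw [ha, hc'])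
        rcases hyt with h | h
        · exact ht0 (hinj' t htd 0 (by omega) h)
        · have ht1 : t = 1 := hinj' t htd 1 h1d h
          subst ht1
          have hy2 : y (1+1) = y 0 ∨ y (1+1) = y 1 := by
            rcases h1 with ⟨ha, hb⟩ | ⟨ha, hb⟩ <;> rcases h0 with ⟨hc', hd'⟩ | ⟨hc', hd'⟩
            · exact Or.inr (by rw [hb, hd'])
            · exact Or.inl (by rw [hb, hc'])
            · exact Or.inl (by rw [hb, hc'])
            · exact Or.inr (by rw [hb, hd'])
          rcases hy2 with h2 | h2
          · exact absurd (hinj' 2 h2d 0 (by omega) (by exact_mod_cast h2)) (by omega)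
          · exact absurd (hinj' 2 h2d 1 h1d (by exact_mod_cast h2)) (by omega)
      have hrho : rho y d P Q ≠ 0 := by
        unfold rho
        rw [Finset.sum_eq_single_of_mem 0 (Finset.mem_range.mpr (by omega)) hothers]
        exact hst
      intro heq
      have := Rn_pert (d := d) (s := eps) hadj P Q
      rw [heq] at this
      have : eps * rho y d P Q = 0 := by linarith
      rcases mul_eq_zero.mp this with h | h
      · exact absurd h (ne_of_gt heps_pos)
      · exact hrho h
    · -- horizontal first edge
      set P := (y 0).1 with hP
      set Q := max (y 0).2 (y 1).2 with hQ
      have hst : cstep (y 0) (y 1) P Q ≠ 0 := by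
        unfold cstep
        rw [if_pos ⟨rfl, hv.symm, rfl⟩]
        split_ifs <;> norm_num
      have hothers : ∀ t ∈ Finset.range d, t ≠ 0 → cstep (y t) (y (t+1)) P Q = 0 := by
        intro t htr ht0
        by_contra hc
        have h1 := (cstep_supp hadj hc).1
        have h0 := (cstep_supp hadj hst).1
        have htd : t < d := Finset.mem_range.mp htr
        have h1d : 1 < d := by omega
        have h2d : 2 < d := by omega
        have hyt : y t = y 0 ∨ y t = y 1 := by
          rcases h1 with ⟨ha, hb⟩ | ⟨ha, hb⟩ <;> rcases h0 with ⟨hc', hd'⟩ | ⟨hc', hd'⟩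
          · exact Or.inl (by rw [ha, hc'])
          · exact Or.inr (by rw [ha, hd'])
          · exact Or.inr (by rw [ha, hd'])
          · exact Or.inl (by rw [ha, hc'])
        rcases hyt with h | h
        · exact ht0 (hinj' t htd 0 (by omega) h)
        · have ht1 : t = 1 := hinj' t htd 1 h1d h
          subst ht1
          have hy2 : y (1+1) = y 0 ∨ y (1+1) = y 1 := by
            rcases h1 with ⟨ha, hb⟩ | ⟨ha, hb⟩ <;> rcases h0 with ⟨hc', hd'⟩ | ⟨hc', hd'⟩
            · exact Or.inr (by rw [hb, hd'])
            · exact Or.inl (by rw [hb, hc'])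
            · exact Or.inl (by rw [hb, hc'])
            · exact Or.inr (by rw [hb, hd'])
          rcases hy2 with h2 | h2
          · exact absurd (hinj' 2 h2d 0 (by omega) (by exact_mod_cast h2)) (by omega)
          · exact absurd (hinj' 2 h2d 1 h1d (by exact_mod_cast h2)) (by omega)
      have hgam : gam y d P Q ≠ 0 := by
        unfold gam
        rw [Finset.sum_eq_single_of_mem 0 (Finset.mem_range.mpr (by omega)) hothers]
        exact hst
      intro heq
      have := Cn_pert (s := eps) hadj hper P Q
      rw [heq] at this
      have : eps * gam y d P Q = 0 := by linarith
      rcases mul_eq_zero.mp this with h | h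
      · exact absurd h (ne_of_gt heps_pos)
      · exact hgam h
  -- conclusion
  intro hext
  rw [mem_extremePoints] at hext
  obtain ⟨-, hkey⟩ := hext
  have h1 : pert X y d eps ∈ PolySet n := hmem eps (by rw [abs_of_pos heps_pos])
  have h2 : pert X y d (-eps) ∈ PolySet n := hmem (-eps) (by rw [abs_neg, abs_of_pos heps_pos])
  have hseg : X ∈ openSegment ℝ (pert X y d eps) (pert X y d (-eps)) := by
    refine ⟨1/2, 1/2, by norm_num, by norm_num, by norm_num, ?_⟩
    funext i j
    show (1/2 : ℝ) * (pert X y d eps i j) + (1/2 : ℝ) * (pert X y d (-eps) i j) = X i j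
    unfold pert
    ring
  exact hne (hkey (pert X y d eps) h1 (pert X y d (-eps)) h2 hseg).1

end ASMaux

namespace ASMaux

variable {n : ℕ}

lemma extremePoints_subset_asm :
    Set.extremePoints ℝ (PolySet n) ⊆ {A : Matrix (Fin n) (Fin n) ℝ | IsASM n A} := by
  intro X hXe
  have hX : X ∈ PolySet n := hXe.1
  have h01R : ∀ p q : ℕ, p ≤ n → Rn X p q = 0 ∨ Rn X p q = 1 := by
    intro p q hp
    rcases le_or_gt q n with hq | hq
    · by_contra h
      rw [not_or] at h
      exact (not_extremePoint_of_frac hX ⟨p, q, hp, hq, Or.inl ⟨h.1, h.2⟩⟩) hXe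
    · exact Or.inl (Rn_out X (by omega) p)
  have h01C : ∀ p q : ℕ, q ≤ n → Cn X p q = 0 ∨ Cn X p q = 1 := by
    intro p q hq
    rcases le_or_gt p n with hp | hp
    · by_contra h
      rw [not_or] at h
      exact (not_extremePoint_of_frac hX ⟨p, q, hp, hq, Or.inr ⟨h.1, h.2⟩⟩) hXe
    · exact Or.inl (Cn_out X (by omega) q)
  have hentry : ∀ (i j : Fin n), X i j = Rn X (i.1+1) j.1 - Rn X i.1 j.1 := by
    intro i j
    rw [Rn_succ, ex_in]
    ring
  have hentry' : ∀ (i j : Fin n), X i j = Cn X i.1 (j.1+1) - Cn X i.1 j.1 := by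
    intro i j
    rw [Cn_succ, ex_in]
    ring
  refine ⟨fun i j => ?_, hX.2.2.2, hX.2.2.1, fun i => ?_, fun j => ?_⟩
  · rcases h01R (i.1+1) j.1 (by omega) with h1 | h1 <;>
      rcases h01R i.1 j.1 (by omega) with h2 | h2 <;>
      rw [hentry i j, h1, h2] <;> norm_num
  · -- rows alternate
    intro j₁ j₂ hlt h1 h2 hz
    simp only at h1 h2 ⊢
    have hlt' : j₁.1 < j₂.1 := hlt
    have hmid : Cn X i.1 j₂.1 = Cn X i.1 (j₁.1+1) := by
      have hle : j₁.1 + 1 ≤ j₂.1 := hlt'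
      have : ∑ k ∈ Finset.Ico (j₁.1+1) j₂.1, ex X i.1 k = 0 := by
        apply Finset.sum_eq_zero
        intro k hk
        rw [Finset.mem_Ico] at hk
        have hkn : k < n := lt_trans hk.2 j₂.2
        rw [ex_eq X i.2 hkn]
        have := hz ⟨k, hkn⟩ (by simp [Fin.lt_def]; omega) (by simp [Fin.lt_def]; omega)
        simpa using this
      rw [Finset.sum_Ico_eq_sub _ hle] at this
      unfold Cn
      linarith
    have hx1 : X i j₁ = Cn X i.1 (j₁.1+1) - Cn X i.1 j₁.1 := hentry' i j₁
    have hx2 : X i j₂ = Cn X i.1 (j₂.1+1) - Cn X i.1 (j₁.1+1) := by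
      rw [hentry' i j₂, hmid]
    rw [hx1] at h1 ⊢
    rw [hx2] at h2 ⊢
    rcases h01C i.1 (j₁.1+1) (by omega) with hv1 | hv1 <;>
      rcases h01C i.1 j₁.1 (by omega) with hv2 | hv2 <;>
      rcases h01C i.1 (j₂.1+1) (by omega) with hv3 | hv3 <;>
      simp only [hv1, hv2, hv3] at h1 h2 ⊢ <;> (revert h1 h2; norm_num)
  · -- columns alternate
    intro i₁ i₂ hlt h1 h2 hz
    simp only at h1 h2 ⊢
    have hlt' : i₁.1 < i₂.1 := hlt
    have hmid : Rn X i₂.1 j.1 = Rn X (i₁.1+1) j.1 := by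
      have hle : i₁.1 + 1 ≤ i₂.1 := hlt'
      have : ∑ k ∈ Finset.Ico (i₁.1+1) i₂.1, ex X k j.1 = 0 := by
        apply Finset.sum_eq_zero
        intro k hk
        rw [Finset.mem_Ico] at hk
        have hkn : k < n := lt_trans hk.2 i₂.2
        rw [ex_eq X hkn j.2]
        have := hz ⟨k, hkn⟩ (by simp [Fin.lt_def]; omega) (by simp [Fin.lt_def]; omega)
        simpa using this
      rw [Finset.sum_Ico_eq_sub _ hle] at this
      unfold Rn
      linarith
    have hx1 : X i₁ j = Rn X (i₁.1+1) j.1 - Rn X i₁.1 j.1 := hentry i₁ j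
    have hx2 : X i₂ j = Rn X (i₂.1+1) j.1 - Rn X (i₁.1+1) j.1 := by
      rw [hentry i₂ j, hmid]
    rw [hx1] at h1 ⊢
    rw [hx2] at h2 ⊢
    rcases h01R (i₁.1+1) j.1 (by omega) with hv1 | hv1 <;>
      rcases h01R i₁.1 j.1 (by omega) with hv2 | hv2 <;>
      rcases h01R (i₂.1+1) j.1 (by omega) with hv3 | hv3 <;>
      simp only [hv1, hv2, hv3] at h1 h2 ⊢ <;> (revert h1 h2; norm_num)

lemma polySet_closed : IsClosed (PolySet n) := by
  have hcont1 : ∀ (s : Finset (Fin n)) (j : Fin n),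
      Continuous (fun X : Matrix (Fin n) (Fin n) ℝ => ∑ k ∈ s, X k j) := by
    intro s j
    exact continuous_finset_sum _ fun k _ => (continuous_apply j).comp (continuous_apply k)
  have hcont2 : ∀ (s : Finset (Fin n)) (i : Fin n),
      Continuous (fun X : Matrix (Fin n) (Fin n) ℝ => ∑ k ∈ s, X i k) := by
    intro s i
    refine continuous_finset_sum _ fun k _ => ?_
    exact (continuous_apply k).comp (continuous_apply i)
  have heq : PolySet n =
      (⋂ (i : Fin n) (j : Fin n),
        ({X : Matrix (Fin n) (Fin n) ℝ | 0 ≤ ∑ k ∈ Finset.Iic i, X k j} ∩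
         {X | ∑ k ∈ Finset.Iic i, X k j ≤ 1})) ∩
      ((⋂ (i : Fin n) (j : Fin n),
        ({X : Matrix (Fin n) (Fin n) ℝ | 0 ≤ ∑ k ∈ Finset.Iic j, X i k} ∩
         {X | ∑ k ∈ Finset.Iic j, X i k ≤ 1})) ∩
       ((⋂ j : Fin n, {X : Matrix (Fin n) (Fin n) ℝ | ∑ k, X k j = 1}) ∩
        (⋂ i : Fin n, {X : Matrix (Fin n) (Fin n) ℝ | ∑ k, X i k = 1}))) := by
    ext X
    simp only [PolySet, Set.mem_setOf_eq, Set.mem_inter_iff, Set.mem_iInter]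
    try tauto
  rw [heq]
  apply IsClosed.inter
  · exact isClosed_iInter fun i => isClosed_iInter fun j =>
      (isClosed_le continuous_const (hcont1 _ j)).inter (isClosed_le (hcont1 _ j) continuous_const)
  apply IsClosed.inter
  · exact isClosed_iInter fun i => isClosed_iInter fun j =>
      (isClosed_le continuous_const (hcont2 _ i)).inter (isClosed_le (hcont2 _ i) continuous_const)
  apply IsClosed.inter
  · exact isClosed_iInter fun j => isClosed_eq (hcont1 _ j) continuous_const
  · exact isClosed_iInter fun i => isClosed_eq (hcont2 _ i) continuous_const

lemma polySet_compact : IsCompact (PolySet n) := by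
  have hbox : IsCompact {X : Matrix (Fin n) (Fin n) ℝ | ∀ i j, X i j ∈ Set.Icc (-1:ℝ) 1} := by
    have : {X : Matrix (Fin n) (Fin n) ℝ | ∀ i j, X i j ∈ Set.Icc (-1:ℝ) 1} =
        Set.pi Set.univ (fun _ : Fin n => Set.pi Set.univ fun _ : Fin n => Set.Icc (-1:ℝ) 1) := by
      ext X
      constructor
      · intro h i _ j _; exact h i j
      · intro h i j; exact h i (Set.mem_univ i) j (Set.mem_univ j)
    rw [this]
    exact isCompact_univ_pi fun i => isCompact_univ_pi fun j => isCompact_Icc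
  apply IsCompact.of_isClosed_subset hbox polySet_closed
  intro X hX i j
  have h1 := Rn_bounds hX (i.1+1) (by omega) j.1
  have h2 := Rn_bounds hX i.1 (by omega) j.1
  have : X i j = Rn X (i.1+1) j.1 - Rn X i.1 j.1 := by
    rw [Rn_succ, ex_in]; ring
  rw [this]
  constructor <;> [linarith [h1.1, h2.2]; linarith [h1.2, h2.1]]

lemma asm_finite : {A : Matrix (Fin n) (Fin n) ℝ | IsASM n A}.Finite := by
  have hsub : {A : Matrix (Fin n) (Fin n) ℝ | IsASM n A} ⊆
      Set.pi Set.univ (fun _ : Fin n => Set.pi Set.univ fun _ : Fin n => ({0,1,-1} : Set ℝ)) := by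
    intro A hA i _ j _
    simpa using hA.1 i j
  exact Set.Finite.subset
    (Set.Finite.pi fun _ => Set.Finite.pi fun _ => (by simp : ({0,1,-1} : Set ℝ).Finite)) hsub

noncomputable instance : LocallyConvexSpace ℝ (Matrix (Fin n) (Fin n) ℝ) :=
  inferInstanceAs (LocallyConvexSpace ℝ (Fin n → Fin n → ℝ))

end ASMaux


/-- The convex hull of the `n × n` alternating sign matrices equals `P(n)`. -/
theorem asmPolytope_eq_polySet (n : ℕ) (hn : 1 ≤ n) :
    convexHull ℝ {A : Matrix (Fin n) (Fin n) ℝ | IsASM n A} = PolySet n := by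
  apply Set.Subset.antisymm
  · exact convexHull_min ASMaux.asm_subset_polySet ASMaux.convex_polySet
  · have h1 := closure_convexHull_extremePoints ASMaux.polySet_compact ASMaux.convex_polySet
      (s := PolySet n)
    calc PolySet n = closure (convexHull ℝ (Set.extremePoints ℝ (PolySet n))) := h1.symm
      _ ⊆ closure (convexHull ℝ {A : Matrix (Fin n) (Fin n) ℝ | IsASM n A}) :=
          closure_mono (convexHull_mono ASMaux.extremePoints_subset_asm)
      _ = convexHull ℝ {A : Matrix (Fin n) (Fin n) ℝ | IsASM n A} :=
          (ASMaux.asm_finite.isClosed_convexHull (𝕜 := ℝ)).closure_eq
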